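/- Fix constants β∈(0,1) and σ≥0. Define h(α) := β/α + ln α − 1 − σ² for α∈(0,β] and R(α) := (ln(1/α) + σ²)·β/(β−α) for α∈(0,β). Then h has a unique zero α* in (0,β); R is strictly decreasing on (0,α*] and strictly increasing on [α*,β); and the minimum of R over (0,β) equals R(α*) = β/α*. -/

import Mathlib

open Set Real

/-- Fix β ∈ (0,1) and σ ≥ 0. With
`h α = β/α + ln α − 1 − σ²` on `(0,β]` and `R α = (ln(1/α) + σ²)·β/(β−α)` on
`(0,β)`: `h` has a unique zero `α*` in `(0,β)`, `R` is strictly decreasing on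
`(0,α*]` and strictly increasing on `[α*,β)`, and the minimum of `R` over
`(0,β)` equals `R α* = β/α*`. -/
theorem stmt15 (β σ : ℝ) (hβ : β ∈ Set.Ioo (0:ℝ) 1) (hσ : 0 ≤ σ)
    (h R : ℝ → ℝ)
    (hh : ∀ α, h α = β / α + Real.log α - 1 - σ ^ 2)
    (hR : ∀ α, R α = (Real.log (1/α) + σ ^ 2) * β / (β - α)) :
    ∃ αs, (αs ∈ Set.Ioo (0:ℝ) β ∧ h αs = 0) ∧
      (∀ α ∈ Set.Ioo (0:ℝ) β, h α = 0 → α = αs) ∧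
      StrictAntiOn R (Set.Ioc (0:ℝ) αs) ∧ StrictMonoOn R (Set.Ico αs β) ∧
      (∀ α ∈ Set.Ioo (0:ℝ) β, R αs ≤ R α) ∧
      R αs = β / αs := by
  obtain ⟨hβ0, hβ1⟩ := hβ
  have hfun : h = fun α => β / α + Real.log α - 1 - σ ^ 2 := funext hh
  have hRfun : R = fun α => (σ ^ 2 - Real.log α) * β / (β - α) := by
    funext α
    rw [hR, one_div, Real.log_inv]
    ring_nf
  -- continuity of h on Ioc 0 β
  have hconth : ContinuousOn h (Ioc 0 β) := by
    rw [hfun]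
    exact ((((continuousOn_const.div continuousOn_id
      (fun x hx => ne_of_gt hx.1)).add
      (Real.continuousOn_log.mono (fun x hx => ne_of_gt hx.1))).sub
      continuousOn_const).sub continuousOn_const)
  -- h strictly decreasing on Ioc 0 β
  have hanti : StrictAntiOn h (Ioc 0 β) := by
    apply strictAntiOn_of_deriv_neg (convex_Ioc 0 β) hconth
    intro x hx
    rw [interior_Ioc] at hx
    have hx0 : x ≠ 0 := ne_of_gt hx.1
    have hd : HasDerivAt h (β * -(x ^ 2)⁻¹ + x⁻¹) x := by
      rw [hfun]
      simp only [div_eq_mul_inv]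
      exact ((((hasDerivAt_inv hx0).const_mul β).add
        (Real.hasDerivAt_log hx0)).sub_const 1).sub_const (σ ^ 2)
    rw [hd.deriv]
    have he : β * -(x ^ 2)⁻¹ + x⁻¹ = (x - β) / x ^ 2 := by
      field_simp
      ring
    rw [he]
    exact div_neg_of_neg_of_pos (sub_neg.mpr hx.2) (pow_pos hx.1 2)
  -- find a point where h is positive
  set s : ℝ := β / (2 + σ ^ 2) with hs_def
  have h2σ : (0:ℝ) < 2 + σ ^ 2 := by positivity
  have hs0 : 0 < s := div_pos hβ0 h2σ
  have hlogs : 1 - 1 / s ≤ Real.log s := by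
    have := Real.log_le_sub_one_of_pos (show (0:ℝ) < s⁻¹ by positivity)
    rw [Real.log_inv] at this
    rw [one_div]
    linarith
  have haval : h (s ^ 2) = β / s ^ 2 + 2 * Real.log s - 1 - σ ^ 2 := by
    rw [hh, show Real.log (s ^ 2) = 2 * Real.log s by
      rw [sq, Real.log_mul hs0.ne' hs0.ne']; ring]
  have he1 : β / s ^ 2 = (2 + σ ^ 2) ^ 2 / β := by
    rw [hs_def]
    field_simp
  have he2 : 1 / s = (2 + σ ^ 2) / β := by
    rw [hs_def, one_div_div]
  have hXβ : (σ ^ 2 * (2 + σ ^ 2)) / β ≥ σ ^ 2 * (2 + σ ^ 2) := by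
    rw [ge_iff_le, le_div_iff₀ hβ0]
    nlinarith [mul_nonneg (mul_nonneg (sq_nonneg σ) h2σ.le) (sub_nonneg.mpr hβ1.le)]
  have hapos : 0 < h (s ^ 2) := by
    have : (2 + σ ^ 2) ^ 2 / β - 2 * ((2 + σ ^ 2) / β) = (σ ^ 2 * (2 + σ ^ 2)) / β := by
      field_simp
      ring
    nlinarith [hlogs, he1, he2, haval]
  have haβ : s ^ 2 < β := by
    have h4 : (4:ℝ) ≤ (2 + σ ^ 2) ^ 2 := by nlinarith
    rw [hs_def, div_pow, div_lt_iff₀ (by positivity)]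
    nlinarith
  have ha0 : 0 < s ^ 2 := by positivity
  have hβneg : h β < 0 := by
    rw [hh, div_self (ne_of_gt hβ0)]
    have := Real.log_neg hβ0 hβ1
    nlinarith
  -- IVT
  obtain ⟨αs, hαsmem, hαs0⟩ :=
    intermediate_value_Icc' (le_of_lt haβ) (hconth.mono (fun x hx =>
      ⟨lt_of_lt_of_le ha0 hx.1, hx.2⟩))
      (⟨le_of_lt hβneg, le_of_lt hapos⟩ : (0:ℝ) ∈ Icc (h β) (h (s ^ 2)))
  have hαspos : 0 < αs := lt_of_lt_of_le ha0 hαsmem.1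
  have hαsβ : αs < β := by
    rcases lt_or_eq_of_le hαsmem.2 with hlt | heq
    · exact hlt
    · rw [heq] at hαs0; rw [hαs0] at hβneg; linarith
  have hαsIoc : αs ∈ Ioc (0:ℝ) β := ⟨hαspos, le_of_lt hαsβ⟩
  -- sign of h
  have hpos : ∀ x ∈ Ioo (0:ℝ) αs, 0 < h x := by
    intro x hx
    have := hanti ⟨hx.1, le_of_lt (lt_trans hx.2 hαsβ)⟩ hαsIoc hx.2
    rw [hαs0] at this
    exact this
  have hneg : ∀ x ∈ Ioo αs β, h x < 0 := by
    intro x hx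
    have := hanti hαsIoc ⟨lt_trans hαspos hx.1, le_of_lt hx.2⟩ hx.1
    rw [hαs0] at this
    exact this
  -- R derivative on Ioo 0 β
  have hRd : ∀ x ∈ Ioo (0:ℝ) β, HasDerivAt R (β * -(h x) / (β - x) ^ 2) x := by
    intro x hx
    have hx0 : x ≠ 0 := ne_of_gt hx.1
    have hbx : β - x ≠ 0 := sub_ne_zero.mpr (ne_of_gt hx.2)
    have d1 : HasDerivAt (fun α => (σ ^ 2 - Real.log α) * β) ((0 - x⁻¹) * β) x :=
      ((hasDerivAt_const x (σ ^ 2)).sub (Real.hasDerivAt_log hx0)).mul_const β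
    have d2 : HasDerivAt (fun α : ℝ => β - α) (0 - 1) x :=
      (hasDerivAt_const x β).sub (hasDerivAt_id x)
    have hd := d1.div d2 hbx
    rw [hRfun]
    refine HasDerivAt.congr_deriv hd ?_
    rw [hh]
    field_simp
    ring
  -- continuity of R on Ioo 0 β
  have hRcont : ContinuousOn R (Ioo 0 β) := by
    rw [hRfun]
    exact ((continuousOn_const.sub (Real.continuousOn_log.mono
      (fun x hx => ne_of_gt hx.1))).mul continuousOn_const).div
      (continuousOn_const.sub continuousOn_id)
      (fun x hx => sub_ne_zero.mpr (ne_of_gt hx.2))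
  have hsub1 : Ioc (0:ℝ) αs ⊆ Ioo 0 β := fun x hx => ⟨hx.1, lt_of_le_of_lt hx.2 hαsβ⟩
  have hsub2 : Ico αs β ⊆ Ioo 0 β := fun x hx => ⟨lt_of_lt_of_le hαspos hx.1, hx.2⟩
  -- strict anti on Ioc 0 αs
  have hRanti : StrictAntiOn R (Ioc 0 αs) := by
    apply strictAntiOn_of_deriv_neg (convex_Ioc 0 αs) (hRcont.mono hsub1)
    intro x hx
    rw [interior_Ioc] at hx
    have hxI : x ∈ Ioo (0:ℝ) β := hsub1 ⟨hx.1, le_of_lt hx.2⟩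
    rw [(hRd x hxI).deriv]
    apply div_neg_of_neg_of_pos
    · have := hpos x hx
      nlinarith
    · exact pow_pos (sub_pos.mpr hxI.2) 2
  -- strict mono on Ico αs β
  have hRmono : StrictMonoOn R (Ico αs β) := by
    apply strictMonoOn_of_deriv_pos (convex_Ico αs β) (hRcont.mono hsub2)
    intro x hx
    rw [interior_Ico] at hx
    have hxI : x ∈ Ioo (0:ℝ) β := ⟨lt_trans hαspos hx.1, hx.2⟩
    rw [(hRd x hxI).deriv]
    apply div_pos
    · have := hneg x hx
      nlinarith
    · exact pow_pos (sub_pos.mpr hxI.2) 2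
  refine ⟨αs, ⟨⟨hαspos, hαsβ⟩, hαs0⟩, ?_, hRanti, hRmono, ?_, ?_⟩
  · intro α hα hα0
    exact hanti.injOn ⟨hα.1, le_of_lt hα.2⟩ hαsIoc (by rw [hα0, hαs0])
  · intro α hα
    rcases lt_trichotomy α αs with hlt | heq | hgt
    · exact (hRanti ⟨hα.1, le_of_lt hlt⟩ ⟨hαspos, le_refl _⟩ hlt).le
    · rw [heq]
    · exact (hRmono ⟨le_refl _, hαsβ⟩ ⟨le_of_lt hgt, hα.2⟩ hgt).le
  · have hlog : Real.log αs = 1 + σ ^ 2 - β / αs := by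
      have := hh αs
      rw [hαs0] at this
      linarith
    rw [hR, one_div, Real.log_inv, hlog]
    have hne1 : αs ≠ 0 := ne_of_gt hαspos
    have hne2 : β - αs ≠ 0 := sub_ne_zero.mpr (ne_of_gt hαsβ)
    field_simp
    ring
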